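/- arXiv:1905.05744 — 3 statements merged into one kernel-verified Lean document; each statement's English description precedes it below -/
import Mathlib

section
/- Let k be a field and a ≤ b, c ≤ d real numbers (allowing b, d = ∞). The graded-module tensor product of one-parameter interval modules satisfies k[a,b) ⊗_gr k[c,d) ≅ k[a+c, min{a+d, b+c}). -/
open CategoryTheory

noncomputable section
attribute [local instance] Classical.propDecidable
set_option linter.unusedSectionVars false

variable (R : Type) [Ring R] {P : Type} [Preorder P]

/-- Condition that a subset is order-convex. -/
def IsConvexSet (I : Set P) : Prop := ∀ ⦃x y z : P⦄, x ∈ I → z ∈ I → x ≤ y → y ≤ z → y ∈ I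

/-- The value of the interval persistence module at a point. -/
def intervalObj (I : Set P) (a : P) : Submodule R R :=
  if a ∈ I then (⊤ : Submodule R R) else ⊥

lemma intervalObj_eq_zero {I : Set P} {a : P} (h : a ∉ I) (x : intervalObj R I a) :
    x = 0 := by
  have hx := x.2
  simp only [intervalObj, if_neg h, Submodule.mem_bot] at hx
  exact Subtype.ext hx

/-- The structure map of the interval module between two degrees. -/
def intervalMapAux (I : Set P) (a b : P) :
    (intervalObj R I a) →ₗ[R] (intervalObj R I b) :=
  if h : a ∈ I ∧ b ∈ I then
    Submodule.inclusion (by simp [intervalObj, h.1, h.2])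
  else 0

lemma intervalMapAux_coe {I : Set P} {a b : P} (ha : a ∈ I) (hb : b ∈ I)
    (x : intervalObj R I a) : ((intervalMapAux R I a b x : R)) = (x : R) := by
  simp [intervalMapAux, ha, hb]

lemma intervalMapAux_of_not {I : Set P} {a b : P} (h : ¬(a ∈ I ∧ b ∈ I))
    (x : intervalObj R I a) : intervalMapAux R I a b x = 0 := by
  simp [intervalMapAux, h]

/-- The interval (indicator) persistence module of a convex set `I`,
as a functor from the preorder `P` to `R`-modules. -/
def intervalModule (I : Set P) (hI : IsConvexSet I) : P ⥤ ModuleCat R where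
  obj a := ModuleCat.of R (intervalObj R I a)
  map {a b} f := ModuleCat.ofHom (intervalMapAux R I a b)
  map_id a := by
    refine ModuleCat.hom_ext (LinearMap.ext fun x => ?_)
    by_cases h : a ∈ I
    · exact Subtype.ext (intervalMapAux_coe R h h x)
    · rw [intervalObj_eq_zero R h x]
      simp
  map_comp {a b c} f g := by
    refine ModuleCat.hom_ext (LinearMap.ext fun x => ?_)
    show intervalMapAux R I a c x = intervalMapAux R I b c (intervalMapAux R I a b x)
    by_cases ha : a ∈ I
    · by_cases hc : c ∈ I
      · have hb : b ∈ I := hI ha hc (leOfHom f) (leOfHom g)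
        apply Subtype.ext
        rw [intervalMapAux_coe R ha hc, intervalMapAux_coe R hb hc,
          intervalMapAux_coe R ha hb]
      · rw [intervalMapAux_of_not R (fun h => hc h.2),
          intervalMapAux_of_not R (fun h => hc h.2)]
    · rw [intervalObj_eq_zero R ha x]
      simp

end

lemma IsConvexSet.of_ordConnected {P : Type} [Preorder P] {s : Set P}
    (h : s.OrdConnected) : IsConvexSet s :=
  fun _ _ _ hx hz hxy hyz => h.out hx hz ⟨hxy, hyz⟩

open CategoryTheory Limits

noncomputable section
variable (k : Type) [Field k]

/-- The index poset `{(s,t) | s + t ≤ r}` for the graded tensor product. -/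
abbrev SumLe (r : ℝ) : Type := {p : ℝ × ℝ // p.1 + p.2 ≤ r}

lemma SumLe.le1 {r : ℝ} {p q : SumLe r} (h : p ≤ q) : p.1.1 ≤ q.1.1 := h.1
lemma SumLe.le2 {r : ℝ} {p q : SumLe r} (h : p ≤ q) : p.1.2 ≤ q.1.2 := h.2

/-- The diagram `(s,t) ↦ M_s ⊗ N_t` over `{(s,t) | s + t ≤ r}` whose colimit is the
degree-`r` piece of the graded tensor product `M ⊗_gr N`. -/
def grDiagram (M N : ℝ ⥤ ModuleCat k) (r : ℝ) : SumLe r ⥤ ModuleCat k where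
  obj p := ModuleCat.of k (TensorProduct k (M.obj p.1.1) (N.obj p.1.2))
  map {p q} f :=
    ModuleCat.ofHom (TensorProduct.map (M.map (homOfLE (SumLe.le1 (leOfHom f)))).hom
      (N.map (homOfLE (SumLe.le2 (leOfHom f)))).hom)
  map_id p := by
    dsimp
    rw [M.map_id, N.map_id]
    exact ModuleCat.hom_ext TensorProduct.map_id
  map_comp {p q s} f g := by
    rw [show (homOfLE (SumLe.le1 (leOfHom (f ≫ g))) : p.1.1 ⟶ s.1.1) =
        homOfLE (SumLe.le1 (leOfHom f)) ≫ homOfLE (SumLe.le1 (leOfHom g)) from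
        Subsingleton.elim _ _,
      show (homOfLE (SumLe.le2 (leOfHom (f ≫ g))) : p.1.2 ⟶ s.1.2) =
        homOfLE (SumLe.le2 (leOfHom f)) ≫ homOfLE (SumLe.le2 (leOfHom g)) from
        Subsingleton.elim _ _,
      M.map_comp, N.map_comp]
    exact ModuleCat.hom_ext (TensorProduct.map_comp _ _ _ _)

/-- The structure-map cocone: the degree-`r` diagram mapping into the degree-`r'` colimit. -/
def grCocone (M N : ℝ ⥤ ModuleCat k) {r r' : ℝ} (h : r ≤ r') :
    Cocone (grDiagram k M N r) where
  pt := colimit (grDiagram k M N r')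
  ι :=
    { app := fun j => colimit.ι (grDiagram k M N r') ⟨j.1, j.2.trans h⟩
      naturality := fun j j' f => by
        refine (?_ : _ = _).trans (Category.comp_id _).symm
        exact colimit.w (grDiagram k M N r')
          (homOfLE (show (⟨j.1, j.2.trans h⟩ : SumLe r') ≤ ⟨j'.1, j'.2.trans h⟩ from
            leOfHom f)) }

/-- The graded-module tensor product of one-parameter persistence modules:
`(M ⊗_gr N)_r = colim_{s+t ≤ r} (M_s ⊗ N_t)`, with structure maps induced by
inclusions of index posets. -/
def grTensor (M N : ℝ ⥤ ModuleCat k) : ℝ ⥤ ModuleCat k where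
  obj r := colimit (grDiagram k M N r)
  map {r r'} f := colimit.desc (grDiagram k M N r) (grCocone k M N (leOfHom f))
  map_id r := by
    apply colimit.hom_ext
    intro j
    rw [colimit.ι_desc]
    exact (Category.comp_id _).symm
  map_comp {r r' r''} f g := by
    apply colimit.hom_ext
    intro j
    rw [colimit.ι_desc]
    refine ((colimit.ι_desc_assoc _ _ _).trans ?_).symm
    exact colimit.ι_desc _ _

end

/-- The half-open interval `[a, b)` in `ℝ`, where the right endpoint is allowed
to be `∞`. -/
def Ico' (a : ℝ) (b : WithTop ℝ) : Set ℝ := {x : ℝ | a ≤ x ∧ (x : WithTop ℝ) < b}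

lemma isConvexSet_Ico' (a : ℝ) (b : WithTop ℝ) : IsConvexSet (Ico' a b) :=
  fun x y z hx hz hxy hyz =>
    ⟨hx.1.trans hxy, lt_of_le_of_lt (by exact_mod_cast hyz) hz.2⟩

namespace GrIntervalProof
open CategoryTheory Limits
noncomputable section
attribute [local instance] Classical.propDecidable

variable (k : Type) [Field k] (a : ℝ) (b : WithTop ℝ) (c : ℝ) (d : WithTop ℝ)

abbrev JSet : Set ℝ := Ico' (a + c) (min ((a : WithTop ℝ) + d) (b + (c : WithTop ℝ)))

abbrev Mf : ℝ ⥤ ModuleCat k := intervalModule k (Ico' a b) (isConvexSet_Ico' a b)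
abbrev Nf : ℝ ⥤ ModuleCat k := intervalModule k (Ico' c d) (isConvexSet_Ico' c d)
abbrev Tf : ℝ ⥤ ModuleCat k := intervalModule k (JSet a b c d) (isConvexSet_Ico' _ _)
abbrev Dg (r : ℝ) := grDiagram k (Mf k a b) (Nf k c d) r

/- WithTop helpers -/
lemma wt_le_sub {x : WithTop ℝ} {u v : ℝ} (h : x + (u : WithTop ℝ) ≤ (v : WithTop ℝ)) :
    x ≤ ((v - u : ℝ) : WithTop ℝ) := by
  cases x with
  | top => rw [top_add] at h; exact absurd h (by simp)
  | coe x =>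
      rw [← WithTop.coe_add, WithTop.coe_le_coe] at h
      exact WithTop.coe_le_coe.2 (by linarith)

lemma wt_le_sub' {x : WithTop ℝ} {u v : ℝ} (h : (u : WithTop ℝ) + x ≤ (v : WithTop ℝ)) :
    x ≤ ((v - u : ℝ) : WithTop ℝ) := wt_le_sub (by rwa [add_comm] at h)

lemma wt_lt_sub {x : WithTop ℝ} {u v : ℝ} (h : (v : WithTop ℝ) < x + (u : WithTop ℝ)) :
    ((v - u : ℝ) : WithTop ℝ) < x := by
  cases x with
  | top => exact WithTop.coe_lt_top _
  | coe x =>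
      rw [← WithTop.coe_add, WithTop.coe_lt_coe] at h
      exact WithTop.coe_lt_coe.2 (by linarith)

lemma wt_lt_cancel {x : WithTop ℝ} {u v : ℝ} (h : ((u + v : ℝ) : WithTop ℝ) < (u : WithTop ℝ) + x) :
    (v : WithTop ℝ) < x := by
  cases x with
  | top => exact WithTop.coe_lt_top _
  | coe x =>
      rw [← WithTop.coe_add, WithTop.coe_lt_coe] at h
      exact WithTop.coe_lt_coe.2 (by linarith)

/- membership lemmas -/
lemma mem_sub_left {r : ℝ} (h : r ∈ JSet a b c d) : r - c ∈ Ico' a b :=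
  ⟨by have := h.1; linarith, wt_lt_sub (lt_of_lt_of_le h.2 (min_le_right _ _))⟩

lemma mem_c {r : ℝ} (h : r ∈ JSet a b c d) : c ∈ Ico' c d :=
  ⟨le_refl c, wt_lt_cancel (lt_of_le_of_lt
    (WithTop.coe_le_coe.2 h.1) (lt_of_lt_of_le h.2 (min_le_left _ _)))⟩

lemma not_mem_J {s t r : ℝ} (hs : s ∈ Ico' a b) (ht : t ∈ Ico' c d) (hst : s + t ≤ r)
    (hr : r ∉ JSet a b c d) :
    min ((a : WithTop ℝ) + d) (b + (c : WithTop ℝ)) ≤ (r : WithTop ℝ) := by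
  by_contra h
  exact hr ⟨by have := hs.1; have := ht.1; linarith, lt_of_not_ge h⟩

/- elements -/
def elt {I : Set ℝ} {x : ℝ} (h : x ∈ I) (v : k) : intervalObj k I x :=
  ⟨v, by simp [intervalObj, h]⟩

@[simp] lemma elt_coe {I : Set ℝ} {x : ℝ} (h : x ∈ I) (v : k) : (elt k h v : k) = v := rfl

lemma elt_eq_smul {I : Set ℝ} {x : ℝ} (h : x ∈ I) (v : k) : elt k h v = v • elt k h 1 :=
  Subtype.ext (by simp [elt])

/- multiplication legs -/
def mulMap (s t : ℝ) :
    TensorProduct k (intervalObj k (Ico' a b) s) (intervalObj k (Ico' c d) t) →ₗ[k] k :=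
  (LinearMap.mul' k k).comp
    (TensorProduct.map (Submodule.subtype _) (Submodule.subtype _))

@[simp] lemma mulMap_tmul (s t : ℝ) (x : intervalObj k (Ico' a b) s)
    (y : intervalObj k (Ico' c d) t) : mulMap k a b c d s t (x ⊗ₜ y) = (x : k) * (y : k) := rfl

def toT (r : ℝ) : k →ₗ[k] intervalObj k (JSet a b c d) r :=
  if h : r ∈ JSet a b c d then
    LinearMap.codRestrict _ LinearMap.id (fun v => by simp [intervalObj, h])
  else 0

lemma toT_coe {r : ℝ} (h : r ∈ JSet a b c d) (v : k) : (toT k a b c d r v : k) = v := by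
  simp [toT, dif_pos h]

lemma toT_not {r : ℝ} (h : r ∉ JSet a b c d) (v : k) : toT k a b c d r v = 0 := by
  simp [toT, dif_neg h]

/- the key commutation lemma for cocone naturality -/
lemma leg_comm {s t s' t' : ℝ} (hss' : s ≤ s') (htt' : t ≤ t') {r : ℝ} (h : s' + t' ≤ r)
    (x : intervalObj k (Ico' a b) s) (y : intervalObj k (Ico' c d) t) :
    toT k a b c d r ((intervalMapAux k (Ico' a b) s s' x : k) *
        (intervalMapAux k (Ico' c d) t t' y : k))
      = toT k a b c d r ((x : k) * (y : k)) := by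
  by_cases hs : s ∈ Ico' a b
  · by_cases ht : t ∈ Ico' c d
    · by_cases hs' : s' ∈ Ico' a b
      · by_cases ht' : t' ∈ Ico' c d
        · rw [intervalMapAux_coe k hs hs', intervalMapAux_coe k ht ht']
        · have hd : d ≤ (t' : WithTop ℝ) :=
            le_of_not_gt (fun hlt => ht' ⟨ht.1.trans htt', hlt⟩)
          have hr : r ∉ JSet a b c d := by
            intro hr
            have h1 : (a : WithTop ℝ) + d ≤ ((s' + t' : ℝ) : WithTop ℝ) := by
              rw [WithTop.coe_add]
              exact add_le_add (WithTop.coe_le_coe.2 (hs.1.trans hss')) hd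
            exact absurd (lt_of_lt_of_le hr.2 (min_le_left _ _))
              (not_lt.2 (h1.trans (WithTop.coe_le_coe.2 h)))
          rw [toT_not k a b c d hr, toT_not k a b c d hr]
      · have hb : b ≤ (s' : WithTop ℝ) :=
          le_of_not_gt (fun hlt => hs' ⟨hs.1.trans hss', hlt⟩)
        have hr : r ∉ JSet a b c d := by
          intro hr
          have h1 : b + (c : WithTop ℝ) ≤ ((s' + t' : ℝ) : WithTop ℝ) := by
            rw [WithTop.coe_add]
            exact add_le_add hb (WithTop.coe_le_coe.2 (ht.1.trans htt'))
          exact absurd (lt_of_lt_of_le hr.2 (min_le_right _ _))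
            (not_lt.2 (h1.trans (WithTop.coe_le_coe.2 h)))
        rw [toT_not k a b c d hr, toT_not k a b c d hr]
    · rw [intervalObj_eq_zero k ht y]; simp
  · rw [intervalObj_eq_zero k hs x]; simp

/- commutation with the structure maps in r -/
lemma toT_step {s t r r' : ℝ} (hst : s + t ≤ r) (hrr' : r ≤ r')
    (x : intervalObj k (Ico' a b) s) (y : intervalObj k (Ico' c d) t) :
    toT k a b c d r' ((x : k) * (y : k))
      = intervalMapAux k (JSet a b c d) r r' (toT k a b c d r ((x : k) * (y : k))) := by
  by_cases hs : s ∈ Ico' a b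
  · by_cases ht : t ∈ Ico' c d
    · by_cases hr : r ∈ JSet a b c d
      · by_cases hr' : r' ∈ JSet a b c d
        · refine Subtype.ext ?_
          rw [toT_coe k a b c d hr', intervalMapAux_coe k hr hr', toT_coe k a b c d hr]
        · rw [toT_not k a b c d hr', intervalMapAux_of_not k (fun hh => hr' hh.2)]
      · have hr' : r' ∉ JSet a b c d := fun hmem =>
          hr ⟨by have := hs.1; have := ht.1; linarith,
            lt_of_le_of_lt (WithTop.coe_le_coe.2 hrr') hmem.2⟩
        rw [toT_not k a b c d hr, toT_not k a b c d hr', map_zero]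
    · rw [intervalObj_eq_zero k ht y]; simp
  · rw [intervalObj_eq_zero k hs x]; simp

/- the cocone -/
def legCocone (r : ℝ) : Cocone (Dg k a b c d r) where
  pt := (Tf k a b c d).obj r
  ι :=
    { app := fun p => ModuleCat.ofHom
        ((toT k a b c d r).comp (mulMap k a b c d p.1.1 p.1.2))
      naturality := fun p q f => by
        simp only [Functor.const_obj_map, Category.comp_id]
        refine ModuleCat.hom_ext (TensorProduct.ext' fun x y => ?_)
        exact leg_comm k a b c d (SumLe.le1 (leOfHom f)) (SumLe.le2 (leOfHom f)) q.2 x y }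

/- colimit pushing helpers -/
lemma iota_push {r : ℝ} {p q : SumLe r} (hpq : p ≤ q) (z : (Dg k a b c d r).obj p) :
    colimit.ι (Dg k a b c d r) p z
      = colimit.ι (Dg k a b c d r) q ((Dg k a b c d r).map (homOfLE hpq) z) :=
  by rw [← ConcreteCategory.comp_apply, colimit.w]

lemma iota_congr {r : ℝ} {p q : SumLe r} (hpq : p ≤ q) (z : (Dg k a b c d r).obj p)
    (z' : (Dg k a b c d r).obj q) (hz : (Dg k a b c d r).map (homOfLE hpq) z = z') :
    colimit.ι (Dg k a b c d r) q z' = colimit.ι (Dg k a b c d r) p z := by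
  rw [← hz, ← ConcreteCategory.comp_apply, colimit.w]

lemma Dg_map_tmul {r : ℝ} {p q : SumLe r} (hpq : p ≤ q)
    (x : intervalObj k (Ico' a b) p.1.1) (y : intervalObj k (Ico' c d) p.1.2) :
    (Dg k a b c d r).map (homOfLE hpq) (x ⊗ₜ y)
      = (intervalMapAux k (Ico' a b) p.1.1 q.1.1 x) ⊗ₜ
          (intervalMapAux k (Ico' c d) p.1.2 q.1.2 y) := rfl

def p0 (r : ℝ) (h : r ∈ JSet a b c d) : SumLe r := ⟨(r - c, c), by simp⟩

def psi (r : ℝ) : (Tf k a b c d).obj r ⟶ (grTensor k (Mf k a b) (Nf k c d)).obj r :=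
  if h : r ∈ JSet a b c d then
    ModuleCat.ofHom
      ((((colimit.ι (Dg k a b c d r) (p0 a b c d r h)).hom :
          (Dg k a b c d r).obj (p0 a b c d r h) →ₗ[k] _).comp
        (LinearMap.toSpanSingleton k _
          ((elt k (mem_sub_left a b c d h) 1) ⊗ₜ (elt k (mem_c a b c d h) 1)))).comp
        (Submodule.subtype _))
  else 0

end
end GrIntervalProof

namespace GrIntervalProof
open CategoryTheory Limits
noncomputable section
attribute [local instance] Classical.propDecidable
variable (k : Type) [Field k] (a : ℝ) (b : WithTop ℝ) (c : ℝ) (d : WithTop ℝ)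

lemma smul_tmul_smul' {A B : Type} [AddCommGroup A] [Module k A] [AddCommGroup B] [Module k B]
    (u v : k) (m : A) (n : B) :
    (u • m) ⊗ₜ[k] (v • n) = (u * v) • (m ⊗ₜ[k] n) := by
  simp [TensorProduct.smul_tmul', TensorProduct.tmul_smul, smul_smul, mul_comm]

def compIso (r : ℝ) :
    (grTensor k (Mf k a b) (Nf k c d)).obj r ≅ (Tf k a b c d).obj r where
  hom := colimit.desc _ (legCocone k a b c d r)
  inv := psi k a b c d r
  inv_hom_id := by
    by_cases h : r ∈ JSet a b c d
    · refine ModuleCat.hom_ext (LinearMap.ext fun v => ?_)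
      show colimit.desc _ (legCocone k a b c d r) (psi k a b c d r v) = v
      rw [show psi k a b c d r = _ from dif_pos h]
      refine Eq.trans (ConcreteCategory.congr_hom
        (colimit.ι_desc (legCocone k a b c d r) (p0 a b c d r h))
        (Subtype.val v • (elt k (mem_sub_left a b c d h) 1 ⊗ₜ[k] elt k (mem_c a b c d h) 1)) : _) ?_
      show (toT k a b c d r).comp (mulMap k a b c d _ _)
          (Subtype.val v • (elt k (mem_sub_left a b c d h) 1 ⊗ₜ elt k (mem_c a b c d h) 1)) = v
      erw [map_smul]
      refine Subtype.ext ?_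
      show Subtype.val v • Subtype.val (toT k a b c d r ((1:k) * (1:k))) = Subtype.val v
      rw [toT_coe k a b c d h]
      simp
    · refine ModuleCat.hom_ext (LinearMap.ext fun v => ?_)
      rw [intervalObj_eq_zero k h v]
      exact map_zero _
  hom_inv_id := by
    show colimit.desc _ (legCocone k a b c d r) ≫ psi k a b c d r
      = 𝟙 (colimit (Dg k a b c d r))
    refine colimit.hom_ext fun p => ?_
    erw [Category.comp_id]
    erw [← Category.assoc, colimit.ι_desc]
    obtain ⟨⟨s, t⟩, hst⟩ := p
    have hst' : s + t ≤ r := hst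
    refine ModuleCat.hom_ext (TensorProduct.ext' (M := intervalObj k (Ico' a b) s)
      (N := intervalObj k (Ico' c d) t) fun x y => ?_)
    show psi k a b c d r (toT k a b c d r ((x : k) * (y : k)))
      = colimit.ι (Dg k a b c d r) ⟨(s, t), hst⟩ (x ⊗ₜ y)
    by_cases hs : s ∈ Ico' a b
    swap
    · rw [intervalObj_eq_zero k hs x]; simp; erw [map_zero, TensorProduct.zero_tmul, map_zero]; rfl
    by_cases ht : t ∈ Ico' c d
    swap
    · rw [intervalObj_eq_zero k ht y]; simp; erw [map_zero, TensorProduct.tmul_zero, map_zero]; rfl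
    have hc : c ∈ Ico' c d := ⟨le_refl c, lt_of_le_of_lt (WithTop.coe_le_coe.2 ht.1) ht.2⟩
    have hsc : s + c ≤ r := by have := ht.1; linarith
    have e1 : colimit.ι (Dg k a b c d r) ⟨(s, t), hst⟩ (x ⊗ₜ y)
        = colimit.ι (Dg k a b c d r) ⟨(s, c), hsc⟩ (x ⊗ₜ elt k hc (y : k)) := by
      refine iota_congr k a b c d
        (show (⟨(s, c), hsc⟩ : SumLe r) ≤ ⟨(s, t), hst⟩ from ⟨le_refl s, ht.1⟩) _ _ ?_
      rw [Dg_map_tmul]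
      congr 1
      · exact Subtype.ext (intervalMapAux_coe k hs hs x)
      · exact Subtype.ext (intervalMapAux_coe k hc ht _)
    by_cases hr : r ∈ JSet a b c d
    · have hrc := mem_sub_left a b c d hr
      have hle : s ≤ r - c := by have := ht.1; linarith
      erw [e1, iota_push k a b c d
        (show (⟨(s, c), hsc⟩ : SumLe r) ≤ p0 a b c d r hr from ⟨hle, le_refl c⟩) _,
        Dg_map_tmul]
      rw [show psi k a b c d r = _ from dif_pos hr]
      show colimit.ι (Dg k a b c d r) (p0 a b c d r hr)
          ((toT k a b c d r ((x : k) * (y : k)) : k) •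
            (elt k (mem_sub_left a b c d hr) 1 ⊗ₜ[k] elt k (mem_c a b c d hr) 1))
        = colimit.ι (Dg k a b c d r) (p0 a b c d r hr)
          ((intervalMapAux k (Ico' a b) s (r - c) x) ⊗ₜ
            (intervalMapAux k (Ico' c d) c c (elt k hc (y : k))))
      rw [toT_coe k a b c d hr]
      congr 1
      have h1 : intervalMapAux k (Ico' a b) s (r - c) x
          = elt k (mem_sub_left a b c d hr) (x : k) :=
        Subtype.ext (intervalMapAux_coe k hs hrc x)
      have h2 : intervalMapAux k (Ico' c d) c c (elt k hc (y : k))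
          = elt k (mem_c a b c d hr) (y : k) :=
        Subtype.ext (intervalMapAux_coe k hc hc _)
      rw [h1, h2, elt_eq_smul k (mem_sub_left a b c d hr) (x : k),
        elt_eq_smul k (mem_c a b c d hr) (y : k)]
      erw [smul_tmul_smul']
      rfl
    · have hL : psi k a b c d r (toT k a b c d r ((x : k) * (y : k))) = 0 := by
        erw [toT_not k a b c d hr, map_zero]
      rw [hL]
      symm
      have hmin := not_mem_J a b c d hs ht hst' hr
      rcases min_le_iff.1 hmin with h1 | h2
      · have ha : a ∈ Ico' a b := ⟨le_refl a, lt_of_le_of_lt (WithTop.coe_le_coe.2 hs.1) hs.2⟩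
        have hat : a + t ≤ r := by have := hs.1; linarith
        have e2 : colimit.ι (Dg k a b c d r) ⟨(s, t), hst⟩ (x ⊗ₜ y)
            = colimit.ι (Dg k a b c d r) ⟨(a, t), hat⟩ (elt k ha (x : k) ⊗ₜ y) := by
          refine iota_congr k a b c d
            (show (⟨(a, t), hat⟩ : SumLe r) ≤ ⟨(s, t), hst⟩ from ⟨hs.1, le_refl t⟩) _ _ ?_
          rw [Dg_map_tmul]
          congr 1
          · exact Subtype.ext (intervalMapAux_coe k ha hs _)
          · exact Subtype.ext (intervalMapAux_coe k ht ht y)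
        have hna : r - a ∉ Ico' c d := fun hm => absurd hm.2 (not_lt.2 (wt_le_sub' h1))
        have hra : a + (r - a) ≤ r := by linarith
        erw [e2, iota_push k a b c d
          (show (⟨(a, t), hat⟩ : SumLe r) ≤ ⟨(a, r - a), hra⟩ from
            ⟨le_refl a, show t ≤ r - a by have := hs.1; linarith⟩) _, Dg_map_tmul,
          intervalMapAux_of_not k (fun hh => hna hh.2), TensorProduct.tmul_zero, map_zero]
        rfl
      · have hnb : r - c ∉ Ico' a b := fun hm => absurd hm.2 (not_lt.2 (wt_le_sub h2))
        have hle2 : s ≤ r - c := by have := ht.1; linarith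
        have hrc2 : r - c + c ≤ r := by linarith
        erw [e1, iota_push k a b c d
          (show (⟨(s, c), hsc⟩ : SumLe r) ≤ ⟨(r - c, c), hrc2⟩ from ⟨hle2, le_refl c⟩) _,
          Dg_map_tmul, intervalMapAux_of_not k (fun hh => hnb hh.2),
          TensorProduct.zero_tmul, map_zero]
        rfl

def theIso : grTensor k (Mf k a b) (Nf k c d) ≅ Tf k a b c d :=
  NatIso.ofComponents (fun r => compIso k a b c d r) (by
    intro r r' f
    refine colimit.hom_ext fun p => ?_
    dsimp only [compIso]
    erw [← Category.assoc, ← Category.assoc]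
    have h1 : colimit.ι (Dg k a b c d r) p ≫ (grTensor k (Mf k a b) (Nf k c d)).map f
        = colimit.ι (Dg k a b c d r') ⟨p.1, p.2.trans (leOfHom f)⟩ := by
      show colimit.ι (Dg k a b c d r) p ≫
        colimit.desc _ (grCocone k (Mf k a b) (Nf k c d) (leOfHom f)) = _
      rw [colimit.ι_desc]
      rfl
    erw [h1, colimit.ι_desc, colimit.ι_desc]
    refine ModuleCat.hom_ext (TensorProduct.ext' fun x y => ?_)
    exact toT_step k a b c d p.2 (leOfHom f) x y)

end
end GrIntervalProof

open CategoryTheory in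
/-- Graded tensor product of interval modules:
`k[a,b) ⊗_gr k[c,d) ≅ k[a+c, min{a+d, b+c})`, where `b` and `d` may be `∞`. -/
theorem grTensor_interval (k : Type) [Field k] (a c : ℝ) (b d : WithTop ℝ)
    (hab : (a : WithTop ℝ) ≤ b) (hcd : (c : WithTop ℝ) ≤ d) :
    Nonempty
      (grTensor k (intervalModule k (Ico' a b) (isConvexSet_Ico' a b))
          (intervalModule k (Ico' c d) (isConvexSet_Ico' c d)) ≅
        intervalModule k (Ico' (a + c) (min ((a : WithTop ℝ) + d) (b + (c : WithTop ℝ))))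
          (isConvexSet_Ico' _ _)) := by
  exact ⟨GrIntervalProof.theIso k a b c d⟩
end

section
/- Let (P,≤) be a lattice, k a field, and D ⊆ P a down-set closed under binary joins (a, b ∈ D implies a ∨ b ∈ D). Then, viewed as a sheaf on P with the Alexandrov topology, the interval module k[D] is flabby: for every up-set U ⊆ P, the restriction map lim_{x∈P} k[D]_x → lim_{x∈U} k[D]_x is surjective. -/
open CategoryTheory

noncomputable section
attribute [local instance] Classical.propDecidable
set_option linter.unusedSectionVars false

variable (R : Type) [Ring R] {P : Type} [Preorder P]

end

open CategoryTheory

noncomputable section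
variable (k : Type) [Field k] {P : Type} [Preorder P]

/-- The module of sections of a persistence module (viewed as a sheaf on the Alexandrov
topology) over a subset `U`: compatible families `(f x)_{x ∈ U}`, i.e. the limit
`lim_{x ∈ U} M_x`. -/
def secsSub (M : P ⥤ ModuleCat k) (U : Set P) :
    Submodule k (Π x : U, M.obj x.1) where
  carrier := {f | ∀ (x y : U) (h : (x : P) ≤ (y : P)), (M.map (homOfLE h)) (f x) = f y}
  add_mem' := fun hf hg x y h => by simp [hf x y h, hg x y h]
  zero_mem' := fun x y h => by simp
  smul_mem' := fun c f hf x y h => by simp [hf x y h]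

/-- The restriction map on sections along an inclusion of subsets. -/
def secsRestrict (M : P ⥤ ModuleCat k) {U V : Set P} (hUV : U ⊆ V) :
    secsSub k M V →ₗ[k] secsSub k M U where
  toFun f :=
    ⟨fun x => f.1 ⟨x.1, hUV x.2⟩,
      fun x y h => f.2 ⟨x.1, hUV x.2⟩ ⟨y.1, hUV y.2⟩ h⟩
  map_add' _ _ := rfl
  map_smul' _ _ := rfl

end

open CategoryTheory in
/-- Let `P` be a lattice and `D` a down-set closed under binary joins.  Then the
interval module `k[D]`, viewed as a sheaf on the Alexandrov topology, is flabby: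
for every up-set `U`, the restriction map `lim_{x∈P} k[D]_x → lim_{x∈U} k[D]_x`
on sections is surjective. -/
theorem downset_join_closed_flabby (k : Type) [Field k] {P : Type} [Lattice P]
    (D : Set P) (hD : IsLowerSet D) (hDjoin : ∀ a b, a ∈ D → b ∈ D → a ⊔ b ∈ D)
    (U : Set P) (hU : IsUpperSet U) :
    Function.Surjective
      (secsRestrict k
        (intervalModule k D (fun _ _ _ _ hz _ hyz => hD hyz hz))
        (Set.subset_univ U)) := by
  classical
  set hconv : IsConvexSet D := (fun _ _ _ _ hz _ hyz => hD hyz hz)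
  intro f
  set fv : ∀ (u : P) (_ : u ∈ U), k := fun u hu =>
    ((show intervalObj k D u from f.1 ⟨u, hu⟩) : k) with hfv
  set c : k := if h : ∃ x, x ∈ U ∩ D then fv h.choose h.choose_spec.1 else 0 with hc
  have hval : ∀ (u : P) (hu : u ∈ U) (hud : u ∈ D), fv u hu = c := by
    intro u hu hud
    have hex : ∃ x, x ∈ U ∩ D := ⟨u, hu, hud⟩
    obtain ⟨hvU, hvD⟩ := hex.choose_spec
    have key : ∀ (a : P) (ha : a ∈ U) (had : a ∈ D) (b : P) (hb : b ∈ U)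
        (hbd : b ∈ D) (hab : a ≤ b), fv a ha = fv b hb := by
      intro a ha had b hb hbd hab
      have h2 : intervalMapAux k D a b (show intervalObj k D a from f.1 ⟨a, ha⟩)
          = (show intervalObj k D b from f.1 ⟨b, hb⟩) :=
        f.2 ⟨a, ha⟩ ⟨b, hb⟩ hab
      calc fv a ha
          = ((intervalMapAux k D a b (show intervalObj k D a from f.1 ⟨a, ha⟩)) : k) :=
            (intervalMapAux_coe k had hbd _).symm
        _ = fv b hb := by rw [h2]
    have hwD : u ⊔ hex.choose ∈ D := hDjoin u hex.choose hud hvD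
    have hwU : u ⊔ hex.choose ∈ U := hU le_sup_left hu
    rw [key u hu hud (u ⊔ hex.choose) hwU hwD le_sup_left,
      ← key hex.choose hvU hvD (u ⊔ hex.choose) hwU hwD le_sup_right]
    simp only [hc, dif_pos hex]
  -- the global section
  set g : Π x : (Set.univ : Set P), (intervalModule k D hconv).obj x.1 := fun x =>
    (show intervalObj k D x.1 from
      if hx : x.1 ∈ D then ⟨c, by simp [intervalObj, hx]⟩ else 0)
    with hg
  have hgD : ∀ (x : (Set.univ : Set P)) (hx : x.1 ∈ D),
      ((show intervalObj k D x.1 from g x) : k) = c := by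
    intro x hx
    simp [hg, hx]
  have hgsec : g ∈ secsSub k (intervalModule k D hconv) Set.univ := by
    intro x y h
    by_cases hyD : y.1 ∈ D
    · have hxD : x.1 ∈ D := hD h hyD
      apply Subtype.ext
      show ((intervalMapAux k D x.1 y.1 (show intervalObj k D x.1 from g x)) : k)
          = ((show intervalObj k D y.1 from g y) : k)
      rw [intervalMapAux_coe k hxD hyD]
      exact (hgD x hxD).trans (hgD y hyD).symm
    · exact (intervalObj_eq_zero k hyD _).trans (intervalObj_eq_zero k hyD _).symm
  refine ⟨⟨g, hgsec⟩, ?_⟩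
  apply Subtype.ext
  funext x
  apply Subtype.ext
  show ((show intervalObj k D x.1 from g ⟨x.1, trivial⟩) : k)
      = ((show intervalObj k D x.1 from f.1 x) : k)
  by_cases hxD : x.1 ∈ D
  · exact (hgD ⟨x.1, trivial⟩ hxD).trans (hval x.1 x.2 hxD).symm
  · exact (congrArg Subtype.val
        (intervalObj_eq_zero k hxD (show intervalObj k D x.1 from g ⟨x.1, trivial⟩))).trans
      (congrArg Subtype.val
        (intervalObj_eq_zero k hxD (show intervalObj k D x.1 from f.1 x))).symm
end

section
/- Let a, b ∈ ℝ² be incomparable in the product order, and let D = D_a ∪ D_b be the union of the principal down-sets at a and b, and U = U_a ∪ U_b the union of the principal up-sets. Then for k a field, lim_{x∈ℝ²} k[D]_x ≅ k while lim_{x∈U} k[D]_x ≅ k², so the restriction map of the sheaf k[D] from ℝ² to U is not surjective; hence k[D] is not a flabby sheaf (and therefore not an injective persistence module). -/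
open CategoryTheory

noncomputable section
attribute [local instance] Classical.propDecidable
set_option linter.unusedSectionVars false

variable (R : Type) [Ring R] {P : Type} [Preorder P]

end

open CategoryTheory

/-- `ℝ²` with the product partial order. -/
def R2 : Type := Fin 2 → ℝ

noncomputable instance : PartialOrder R2 := inferInstanceAs (PartialOrder (Fin 2 → ℝ))

noncomputable section Helper
open CategoryTheory
attribute [local instance] Classical.propDecidable

variable (k : Type) [Field k]

/-- `D = D_a ∪ D_b`. -/
abbrev Dse (a b : R2) : Set R2 := {x : R2 | x ≤ a} ∪ {x : R2 | x ≤ b}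

lemma Dse_conv (a b : R2) : IsConvexSet (Dse a b) :=
  fun _ _ _ _ hz _ hyz => hz.imp (fun h => le_trans hyz h) (fun h => le_trans hyz h)

/-- The interval module of `D`. -/
def Mab (a b : R2) : R2 ⥤ ModuleCat k := intervalModule k (Dse a b) (Dse_conv a b)

/-- An element of the interval module stalk at a point of `D`. -/
def elt {D : Set R2} {x : R2} (hx : x ∈ D) (c : k) : intervalObj k D x :=
  ⟨c, by simp [intervalObj, hx]⟩

@[simp] lemma elt_coe {D : Set R2} {x : R2} (hx : x ∈ D) (c : k) :
    ((elt k hx c : intervalObj k D x) : k) = c := rfl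

/-- The coefficient of an element of a stalk of the interval module. -/
def cval {D : Set R2} {x : R2} (v : intervalObj k D x) : k := v.1

@[simp] lemma cval_elt {D : Set R2} {x : R2} (hx : x ∈ D) (c : k) :
    cval k (elt k hx c) = c := rfl

/-- The componentwise minimum. -/
def melt (a b : R2) : R2 := fun i => min (a i) (b i)

lemma melt_le_left (a b : R2) : melt a b ≤ a := fun i => min_le_left _ _

lemma melt_mem (a b : R2) : melt a b ∈ Dse a b := Or.inl (melt_le_left a b)

/-- A global section has the same coefficient at every point of `D` as at the meet. -/
lemma global_coe (a b : R2) (f : secsSub k (Mab k a b) Set.univ) {x : R2}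
    (hx : x ∈ Dse a b) :
    (cval k (f.1 ⟨x, trivial⟩) : k)
      = (cval k (f.1 ⟨melt a b, trivial⟩) : k) := by
  set w : R2 := fun i => min (x i) (min (a i) (b i)) with hw
  have hwx : w ≤ x := fun i => min_le_left _ _
  have hwm : w ≤ melt a b := fun i => min_le_right _ _
  have hwD : w ∈ Dse a b := Or.inl (le_trans hwm (melt_le_left a b))
  have h1 := f.2 ⟨w, trivial⟩ ⟨x, trivial⟩ hwx
  have h2 := f.2 ⟨w, trivial⟩ ⟨melt a b, trivial⟩ hwm
  have c1 : (cval k (f.1 ⟨x, trivial⟩) : k)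
      = (cval k (f.1 ⟨w, trivial⟩) : k) := by
    rw [← h1]; exact intervalMapAux_coe k hwD hx _
  have c2 : (cval k (f.1 ⟨melt a b, trivial⟩) : k)
      = (cval k (f.1 ⟨w, trivial⟩) : k) := by
    rw [← h2]; exact intervalMapAux_coe k hwD (melt_mem a b) _
  rw [c1, c2]

/-- The constant global section with coefficient `c`. -/
def gsec (a b : R2) (c : k) : secsSub k (Mab k a b) Set.univ :=
  ⟨fun x => if hx : x.1 ∈ Dse a b then elt k hx c else 0, by
    intro x y h
    change intervalMapAux k (Dse a b) x.1 y.1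
        ((if hx : x.1 ∈ Dse a b then elt k hx c else 0 : intervalObj k (Dse a b) x.1)) =
      (if hx : y.1 ∈ Dse a b then elt k hx c else 0 : intervalObj k (Dse a b) y.1)
    by_cases hy : y.1 ∈ Dse a b
    · have hx : x.1 ∈ Dse a b := hy.imp (fun h' => le_trans h h') (fun h' => le_trans h h')
      simp only [dif_pos hx, dif_pos hy]
      exact Subtype.ext (intervalMapAux_coe k hx hy _)
    · simp only [dif_neg hy]
      by_cases hx : x.1 ∈ Dse a b
      · simp only [dif_pos hx]
        exact intervalMapAux_of_not k (fun hc => hy hc.2) _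
      · simp only [dif_neg hx]; exact map_zero _⟩

/-- The global sections are isomorphic to `k`. -/
def eqv1 (a b : R2) : (secsSub k (Mab k a b) Set.univ) ≃ₗ[k] k where
  toFun f := (cval k (f.1 ⟨melt a b, trivial⟩) : k)
  map_add' f g := rfl
  map_smul' c f := rfl
  invFun c := gsec k a b c
  left_inv f := by
    apply Subtype.ext; funext x
    show (if hx : x.1 ∈ Dse a b then elt k hx _ else 0) = f.1 x
    by_cases hx : x.1 ∈ Dse a b
    · rw [dif_pos hx]
      refine Subtype.ext ?_
      rw [elt_coe]
      exact (global_coe k a b f hx).symm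
    · rw [dif_neg hx]
      exact (intervalObj_eq_zero k hx (f.1 x)).symm
  right_inv c := by
    show cval k (if hx : melt a b ∈ Dse a b then elt k hx c else 0) = c
    rw [dif_pos (melt_mem a b)]
    rfl

/-- `U = U_a ∪ U_b`. -/
def Use (a b : R2) : Set R2 := {x : R2 | a ≤ x} ∪ {x : R2 | b ≤ x}

lemma mem_UD {a b : R2} (hab : ¬ a ≤ b) (hba : ¬ b ≤ a) {x : R2}
    (hxU : x ∈ Use a b) (hxD : x ∈ Dse a b) : x = a ∨ x = b := by
  rcases hxU with h1 | h1 <;> rcases hxD with h2 | h2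
  · exact Or.inl (le_antisymm h2 h1)
  · exact absurd (le_trans h1 h2) hab
  · exact absurd (le_trans h1 h2) hba
  · exact Or.inr (le_antisymm h2 h1)

lemma a_mem_U (a b : R2) : a ∈ Use a b := Or.inl (le_refl a)
lemma b_mem_U (a b : R2) : b ∈ Use a b := Or.inr (le_refl b)
lemma a_mem_D (a b : R2) : a ∈ Dse a b := Or.inl (le_refl a)
lemma b_mem_D (a b : R2) : b ∈ Dse a b := Or.inr (le_refl b)

/-- The section over `U` with coefficients `c 0` at `a` and `c 1` at `b`. -/
def usec (a b : R2) (hab : ¬ a ≤ b) (hba : ¬ b ≤ a) (c : Fin 2 → k) :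
    secsSub k (Mab k a b) (Use a b) :=
  ⟨fun x => if h : x.1 = a then elt k (show x.1 ∈ Dse a b from Or.inl (le_of_eq h)) (c 0)
      else if h : x.1 = b then elt k (show x.1 ∈ Dse a b from Or.inr (le_of_eq h)) (c 1)
      else 0, by
    intro x y h
    change intervalMapAux k (Dse a b) x.1 y.1
        (if h : x.1 = a then elt k (show x.1 ∈ Dse a b from Or.inl (le_of_eq h)) (c 0)
        else if h : x.1 = b then elt k (show x.1 ∈ Dse a b from Or.inr (le_of_eq h)) (c 1)
        else 0 : intervalObj k (Dse a b) x.1) =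
      (if h : y.1 = a then elt k (show y.1 ∈ Dse a b from Or.inl (le_of_eq h)) (c 0)
        else if h : y.1 = b then elt k (show y.1 ∈ Dse a b from Or.inr (le_of_eq h)) (c 1)
        else 0 : intervalObj k (Dse a b) y.1)
    by_cases hxa : x.1 = a
    · simp only [dif_pos hxa]
      by_cases hya : y.1 = a
      · simp only [dif_pos hya]
        have h1 : x.1 ∈ Dse a b := Or.inl (le_of_eq hxa)
        have h2 : y.1 ∈ Dse a b := Or.inl (le_of_eq hya)
        exact Subtype.ext (intervalMapAux_coe k (I := Dse a b) h1 h2 _)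
      · by_cases hyb : y.1 = b
        · exact absurd (le_of_le_of_eq (le_of_eq_of_le hxa.symm h) hyb) hab
        · simp only [dif_neg hya, dif_neg hyb]
          have hyD : y.1 ∉ Dse a b := fun hD =>
            (mem_UD hab hba y.2 hD).elim hya hyb
          exact intervalMapAux_of_not k (fun hc => hyD hc.2) _
    · by_cases hxb : x.1 = b
      · simp only [dif_neg hxa, dif_pos hxb]
        by_cases hya : y.1 = a
        · exact absurd (le_of_le_of_eq (le_of_eq_of_le hxb.symm h) hya) hba
        · by_cases hyb : y.1 = b
          · simp only [dif_neg hya, dif_pos hyb]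
            have h1 : x.1 ∈ Dse a b := Or.inr (le_of_eq hxb)
            have h2 : y.1 ∈ Dse a b := Or.inr (le_of_eq hyb)
            exact Subtype.ext (intervalMapAux_coe k (I := Dse a b) h1 h2 _)
          · simp only [dif_neg hya, dif_neg hyb]
            have hyD : y.1 ∉ Dse a b := fun hD =>
              (mem_UD hab hba y.2 hD).elim hya hyb
            exact intervalMapAux_of_not k (fun hc => hyD hc.2) _
      · simp only [dif_neg hxa, dif_neg hxb]
        have hxD : x.1 ∉ Dse a b := fun hD =>
          (mem_UD hab hba x.2 hD).elim hxa hxb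
        have hya : y.1 ≠ a := fun hya =>
          hxD (Or.inl (le_of_le_of_eq h hya))
        have hyb : y.1 ≠ b := fun hyb =>
          hxD (Or.inr (le_of_le_of_eq h hyb))
        simp only [dif_neg hya, dif_neg hyb]
        exact map_zero _⟩

lemma usec_coe_a (a b : R2) (hab : ¬ a ≤ b) (hba : ¬ b ≤ a) (c : Fin 2 → k) :
    (cval k ((usec k a b hab hba c).1 ⟨a, a_mem_U a b⟩) : k) = c 0 := by
  show cval k (if h : a = a then elt k (show a ∈ Dse a b from Or.inl (le_of_eq h)) (c 0)
      else if h : a = b then elt k (show a ∈ Dse a b from Or.inr (le_of_eq h)) (c 1)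
      else 0) = c 0
  rw [dif_pos rfl]
  rfl

lemma usec_coe_b (a b : R2) (hab : ¬ a ≤ b) (hba : ¬ b ≤ a) (c : Fin 2 → k) :
    (cval k ((usec k a b hab hba c).1 ⟨b, b_mem_U a b⟩) : k) = c 1 := by
  have hba' : b ≠ a := fun h => hba (le_of_eq h)
  show cval k (if h : b = a then elt k (show b ∈ Dse a b from Or.inl (le_of_eq h)) (c 0)
      else if h : b = b then elt k (show b ∈ Dse a b from Or.inr (le_of_eq h)) (c 1)
      else 0) = c 1
  rw [dif_neg hba', dif_pos rfl]
  rfl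

/-- The sections over `U` are isomorphic to `k²`. -/
def eqv2 (a b : R2) (hab : ¬ a ≤ b) (hba : ¬ b ≤ a) :
    (secsSub k (Mab k a b) (Use a b)) ≃ₗ[k] (Fin 2 → k) where
  toFun f := fun i => if i = 0
    then (cval k (f.1 ⟨a, a_mem_U a b⟩) : k)
    else (cval k (f.1 ⟨b, b_mem_U a b⟩) : k)
  map_add' f g := by funext i; by_cases h : i = 0 <;> simp [h, cval] <;> rfl
  map_smul' r f := by funext i; by_cases h : i = 0 <;> simp [h, cval] <;> rfl
  invFun c := usec k a b hab hba c
  left_inv f := by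
    apply Subtype.ext; funext x
    show (if h : x.1 = a then elt k (show x.1 ∈ Dse a b from Or.inl (le_of_eq h)) _
      else if h : x.1 = b then elt k (show x.1 ∈ Dse a b from Or.inr (le_of_eq h)) _
      else 0) = f.1 x
    by_cases hxa : x.1 = a
    · rw [dif_pos hxa]
      have hx : x = (⟨a, a_mem_U a b⟩ : Use a b) := Subtype.ext hxa
      subst hx
      refine Subtype.ext ?_
      rw [elt_coe]
      simp only [if_pos (rfl : (0 : Fin 2) = 0)]
      rfl
    · rw [dif_neg hxa]
      by_cases hxb : x.1 = b
      · rw [dif_pos hxb]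
        have hx : x = (⟨b, b_mem_U a b⟩ : Use a b) := Subtype.ext hxb
        subst hx
        refine Subtype.ext ?_
        rw [elt_coe]
        have h10 : (1 : Fin 2) ≠ 0 := by decide
        simp only [if_neg h10]
        rfl
      · rw [dif_neg hxb]
        have hxD : x.1 ∉ Dse a b := fun hD =>
          (mem_UD hab hba x.2 hD).elim hxa hxb
        exact (intervalObj_eq_zero k hxD (f.1 x)).symm
  right_inv c := by
    funext i
    fin_cases i
    · simpa using usec_coe_a k a b hab hba c
    · have h10 : (1 : Fin 2) ≠ 0 := by decide
      simpa [h10] using usec_coe_b k a b hab hba c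

lemma not_surj (a b : R2) (hab : ¬ a ≤ b) (hba : ¬ b ≤ a) :
    ¬ Function.Surjective
      (secsRestrict k (Mab k a b) (Set.subset_univ (Use a b))) := by
  intro hs
  set c : Fin 2 → k := fun i => if i = 0 then 1 else 0 with hc
  obtain ⟨f, hf⟩ := hs (usec k a b hab hba c)
  have ha' : cval k (f.1 ⟨a, trivial⟩) = c 0 :=
    (congrArg (fun g => cval k (g.1 ⟨a, a_mem_U a b⟩)) hf).trans
      (usec_coe_a k a b hab hba c)
  have hb' : cval k (f.1 ⟨b, trivial⟩) = c 1 :=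
    (congrArg (fun g => cval k (g.1 ⟨b, b_mem_U a b⟩)) hf).trans
      (usec_coe_b k a b hab hba c)
  have hc0 : c 0 = 1 := if_pos rfl
  have hc1 : c 1 = 0 := if_neg (by decide)
  have h1 := global_coe k a b f (a_mem_D a b)
  have h2 := global_coe k a b f (b_mem_D a b)
  rw [ha', hc0] at h1
  rw [hb', hc1] at h2
  exact one_ne_zero (h1.trans h2.symm)

end Helper

open CategoryTheory in
/-- Let `a, b ∈ ℝ²` be incomparable, `D = D_a ∪ D_b` and `U = U_a ∪ U_b`.  Then the
space of global sections of the sheaf `k[D]` is `k`, its sections over `U` form `k²`,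
and the restriction map is not surjective; hence `k[D]` is not flabby. -/
theorem union_downsets_not_flabby (k : Type) [Field k] (a b : R2)
    (hab : ¬ a ≤ b) (hba : ¬ b ≤ a) :
    Nonempty
      ((secsSub k
        (intervalModule k ({x : R2 | x ≤ a} ∪ {x : R2 | x ≤ b})
          (fun _ _ _ _ hz hxy hyz =>
            hz.imp (fun h => le_trans hyz h) (fun h => le_trans hyz h)))
        (Set.univ : Set R2)) ≃ₗ[k] k) ∧
    Nonempty
      ((secsSub k
        (intervalModule k ({x : R2 | x ≤ a} ∪ {x : R2 | x ≤ b})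
          (fun _ _ _ _ hz hxy hyz =>
            hz.imp (fun h => le_trans hyz h) (fun h => le_trans hyz h)))
        ({x : R2 | a ≤ x} ∪ {x : R2 | b ≤ x})) ≃ₗ[k] (Fin 2 → k)) ∧
    ¬ Function.Surjective
      (secsRestrict k
        (intervalModule k ({x : R2 | x ≤ a} ∪ {x : R2 | x ≤ b})
          (fun _ _ _ _ hz hxy hyz =>
            hz.imp (fun h => le_trans hyz h) (fun h => le_trans hyz h)))
        (Set.subset_univ ({x : R2 | a ≤ x} ∪ {x : R2 | b ≤ x}))) := by
  exact ⟨⟨eqv1 k a b⟩, ⟨eqv2 k a b hab hba⟩, not_surj k a b hab hba⟩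
end
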